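/- arXiv:2012.01077 — 2 statements merged into one kernel-verified Lean document; each statement's English description precedes it below -/
import Mathlib

section
/- Let λ = (λ₁,…,λ_d) : ℝ → ℝ^d be of class C¹ and let a_1,…,a_d : ℝ → ℝ be the coefficient functions of the monic polynomial P(t)(Z) = ∏_{j=1}^d (Z − λ_j(t)) = Z^d + Σ_{k=1}^d a_k(t) Z^{d−k}. Assume each a_k is of class W^{2,1}_loc, i.e. a_k is C¹ and there is a locally Lebesgue-integrable function w_k : ℝ → ℝ with a_k′(b) − a_k′(a) = ∫_a^b w_k(t) dt for all a ≤ b. Then each derivative λ_j′, j = 1,…,d, has the Luzin (N) property: for every set E ⊆ ℝ of Lebesgue measure zero, the image λ_j′(E) has Lebesgue measure zero. -/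
open Polynomial MeasureTheory

noncomputable def polyAlong {n : ℕ} (f : MvPolynomial (Fin n) ℝ) (x v : Fin n → ℝ) :
    Polynomial ℝ :=
  MvPolynomial.aeval (fun i => Polynomial.C (x i) + Polynomial.X * Polynomial.C (v i)) f

def GardingHyperbolic {n : ℕ} (d : ℕ) (f : MvPolynomial (Fin n) ℝ) (v : Fin n → ℝ) : Prop :=
  f.IsHomogeneous d ∧ MvPolynomial.eval v f ≠ 0 ∧
    ∀ x : Fin n → ℝ, (polyAlong f x (-v)).Splits

def IsCharMap {n : ℕ} (d : ℕ) (f : MvPolynomial (Fin n) ℝ) (v : Fin n → ℝ)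
    (lam : (Fin n → ℝ) → Fin d → ℝ) : Prop :=
  (∀ x, ∀ i j : Fin d, i ≤ j → lam x j ≤ lam x i) ∧
  ∀ x, polyAlong f x v =
      Polynomial.C (MvPolynomial.eval v f) * ∏ j : Fin d, (Polynomial.X + Polynomial.C (lam x j))

def DCOn {E : Type*} [AddCommMonoid E] [Module ℝ E] [TopologicalSpace E]
    (U : Set E) (g : E → ℝ) : Prop :=
  ∃ g₁ g₂ : E → ℝ, ConvexOn ℝ U g₁ ∧ ConvexOn ℝ U g₂ ∧
    ContinuousOn g₁ U ∧ ContinuousOn g₂ U ∧ ∀ x ∈ U, g x = g₁ x - g₂ x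

def W21loc (u : ℝ → ℝ) : Prop :=
  ContDiff ℝ 1 u ∧ ∃ w : ℝ → ℝ, LocallyIntegrable w ∧
    ∀ a b : ℝ, a ≤ b → deriv u b - deriv u a = ∫ t in a..b, w t

def CkLip {E : Type*} [NormedAddCommGroup E] [NormedSpace ℝ E] (k : ℕ) (g : E → ℝ) : Prop :=
  ContDiff ℝ k g ∧ ∀ y : E, ∃ U ∈ nhds y, ∃ K : NNReal, LipschitzOnWith K (iteratedFDeriv ℝ k g) U

open Set Filter
open scoped ENNReal NNReal Topology

lemma luzin_core (g ρ : ℝ → ℝ) (a b : ℝ)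
    (hρint : IntegrableOn ρ (Set.Icc a b))
    (hρ0 : ∀ t, 0 ≤ ρ t)
    (hg : ∀ x y, x ∈ Set.Icc a b → y ∈ Set.Icc a b → x ≤ y →
      |g y - g x| ≤ ∫ t in x..y, ρ t)
    (E : Set ℝ) (hEs : E ⊆ Set.Icc a b) (hE0 : volume E = 0) :
    volume (g '' E) = 0 := by
  set ν : Measure ℝ :=
    (volume.restrict (Set.Icc a b)).withDensity (fun t => ENNReal.ofReal (ρ t)) with hν
  haveI : IsFiniteMeasure ν := by
    constructor
    rw [hν, withDensity_apply _ MeasurableSet.univ, Measure.restrict_univ]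
    exact hρint.lintegral_lt_top
  have hνE : ν E = 0 := by
    obtain ⟨E', hEE', hE'meas, hE'0⟩ := exists_measurable_superset_of_null hE0
    refine le_antisymm (le_trans (measure_mono hEE') ?_) zero_le
    rw [hν, withDensity_apply _ hE'meas]
    have : (volume.restrict (Set.Icc a b)) E' = 0 := by
      rw [Measure.restrict_apply hE'meas]
      exact le_antisymm (le_trans (measure_mono Set.inter_subset_left) hE'0.le) zero_le
    rw [setLIntegral_measure_zero _ _ this]
  have key : ∀ ε : ℝ≥0∞, 0 < ε → volume (g '' E) ≤ ε := by
    intro ε hε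
    obtain ⟨U, hEU, hUopen, hνU⟩ := Set.exists_isOpen_lt_of_lt E ε (by rw [hνE]; exact hε)
    set U' := U ∩ Set.Ioo a b with hU'
    have hU'open : IsOpen U' := hUopen.inter isOpen_Ioo
    -- the set of connected components of U'
    set C : Set (Set ℝ) := (fun x => connectedComponentIn U' x) '' U' with hC
    -- each component is open
    have hCopen : ∀ S ∈ C, IsOpen S := by
      rintro S ⟨x, hx, rfl⟩
      exact hU'open.connectedComponentIn
    -- countability
    have hCcount : C.Countable := by
      have hsub : C ⊆ Set.range (fun q : ℚ => connectedComponentIn U' (q : ℝ)) := by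
        rintro S ⟨x, hx, rfl⟩
        have hne : (connectedComponentIn U' x).Nonempty := ⟨x, mem_connectedComponentIn hx⟩
        have hopen : IsOpen (connectedComponentIn U' x) := hU'open.connectedComponentIn
        have hdense : Dense (Set.range ((↑) : ℚ → ℝ)) := Rat.denseRange_cast
        obtain ⟨x', ⟨q, rfl⟩, hq⟩ := hdense.exists_mem_open hopen hne
        exact ⟨q, (connectedComponentIn_eq hq).symm⟩
      exact (Set.countable_range _).mono hsub
    -- disjointness
    have hCdisj : C.PairwiseDisjoint id := by
      rintro S ⟨x, hx, rfl⟩ T ⟨y, hy, rfl⟩ hST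
      refine Set.disjoint_left.mpr fun z hzS hzT => hST ?_
      have hzS' : z ∈ connectedComponentIn U' x := hzS
      have hzT' : z ∈ connectedComponentIn U' y := hzT
      show connectedComponentIn U' x = connectedComponentIn U' y
      exact (connectedComponentIn_eq hzS').trans (connectedComponentIn_eq hzT').symm
    -- each component maps into small image
    have himg : ∀ S ∈ C, volume (g '' S) ≤ ν S := by
      rintro S ⟨x, hx, rfl⟩
      set S' := connectedComponentIn U' x
      have hS'sub : S' ⊆ Set.Ioo a b := (connectedComponentIn_subset _ _).trans
        Set.inter_subset_right
      have hord : S'.OrdConnected := (isPreconnected_connectedComponentIn).ordConnected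
      refine le_trans (Real.volume_le_diam _) (EMetric.diam_le ?_)
      rintro u ⟨p, hp, rfl⟩ v ⟨q, hq, rfl⟩
      wlog hpq : p ≤ q generalizing p q
      · rw [edist_comm]; exact this q hq p hp (le_of_not_ge hpq)
      have hbound := hg p q (Set.Ioo_subset_Icc_self (hS'sub hp))
        (Set.Ioo_subset_Icc_self (hS'sub hq)) hpq
      have hIoc : Set.Ioc p q ⊆ S' := fun z hz => hord.out hp hq ⟨le_of_lt hz.1, hz.2⟩
      have hIocIcc : Set.Ioc p q ⊆ Set.Icc a b := fun z hz =>
        Set.Ioo_subset_Icc_self (hS'sub (hIoc hz))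
      have hedist : edist (g p) (g q) = ENNReal.ofReal |g q - g p| := by
        rw [edist_dist, Real.dist_eq, abs_sub_comm]
      rw [hedist]
      have hint : ∫ t in p..q, ρ t = ∫ t in Set.Ioc p q, ρ t := by
        rw [intervalIntegral.integral_of_le hpq]
      have hcalc : ENNReal.ofReal (∫ t in Set.Ioc p q, ρ t)
          = ∫⁻ t in Set.Ioc p q, ENNReal.ofReal (ρ t) := by
        rw [ofReal_integral_eq_lintegral_ofReal (hρint.mono_set hIocIcc)
          (Filter.Eventually.of_forall fun t => hρ0 t)]
      have hν' : ν (Set.Ioc p q) = ∫⁻ t in Set.Ioc p q, ENNReal.ofReal (ρ t) := by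
        rw [hν, withDensity_apply _ measurableSet_Ioc, Measure.restrict_restrict measurableSet_Ioc,
          Set.inter_eq_self_of_subset_left hIocIcc]
      calc ENNReal.ofReal |g q - g p| ≤ ENNReal.ofReal (∫ t in p..q, ρ t) :=
            ENNReal.ofReal_le_ofReal hbound
        _ = ν (Set.Ioc p q) := by rw [hint, hcalc, hν']
        _ ≤ ν S' := measure_mono hIoc
    -- assemble
    have hcover : g '' E ⊆ g '' (E \ Set.Ioo a b) ∪ ⋃ S ∈ C, g '' S := by
      rintro _ ⟨t, ht, rfl⟩
      by_cases htI : t ∈ Set.Ioo a b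
      · have htU' : t ∈ U' := ⟨hEU ht, htI⟩
        exact Or.inr (Set.mem_biUnion ⟨t, htU', rfl⟩
          ⟨t, mem_connectedComponentIn htU', rfl⟩)
      · exact Or.inl ⟨t, ⟨ht, htI⟩, rfl⟩
    have hends : volume (g '' (E \ Set.Ioo a b)) = 0 := by
      have hsub : E \ Set.Ioo a b ⊆ {a, b} := by
        intro t ⟨htE, htI⟩
        have := hEs htE
        rcases eq_or_lt_of_le this.1 with h1 | h1
        · exact Or.inl h1.symm
        rcases eq_or_lt_of_le this.2 with h2 | h2
        · exact Or.inr h2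
        exact absurd ⟨h1, h2⟩ htI
      refine le_antisymm (le_trans (measure_mono (Set.image_mono hsub)) ?_) zero_le
      have : g '' {a, b} ⊆ {g a, g b} := by
        rintro _ ⟨t, ht, rfl⟩
        rcases ht with h | h
        · exact Or.inl (by rw [h])
        · exact Or.inr (by rw [Set.mem_singleton_iff.mp h]; exact Set.mem_singleton _)
      exact le_trans (measure_mono this) (by
          have h1 : ({g a, g b} : Set ℝ) = {g a} ∪ {g b} := rfl
          rw [h1]
          refine le_trans (measure_union_le _ _) ?_
          simp [Real.volume_singleton])
    calc volume (g '' E) ≤ volume (g '' (E \ Set.Ioo a b)) + volume (⋃ S ∈ C, g '' S) :=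
          le_trans (measure_mono hcover) (measure_union_le _ _)
      _ = volume (⋃ S ∈ C, g '' S) := by rw [hends, zero_add]
      _ ≤ ∑' S : C, volume (g '' (S : Set ℝ)) := measure_biUnion_le _ hCcount _
      _ ≤ ∑' S : C, ν (S : Set ℝ) := ENNReal.tsum_le_tsum fun S => himg S S.2
      _ = ν (⋃ S ∈ C, (S : Set ℝ)) := (measure_biUnion hCcount hCdisj
            (fun S hS => (hCopen S hS).measurableSet)).symm
      _ ≤ ν U := measure_mono (by
            refine Set.iUnion₂_subset fun S hS => ?_
            rcases hS with ⟨x, hx, rfl⟩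
            exact (connectedComponentIn_subset _ _).trans Set.inter_subset_left)
      _ ≤ ε := hνU.le
  refine le_antisymm ?_ zero_le
  refine ENNReal.le_of_forall_pos_le_add fun ε hε _ => ?_
  simpa using key ε (by exact_mod_cast hε)

lemma luzin_sum_prod (N : ℕ) (u w ψ : ℕ → ℝ → ℝ) (O : Set ℝ) (hO : IsOpen O)
    (hu : ∀ k, Continuous (u k))
    (hw : ∀ k, LocallyIntegrable (w k))
    (huw : ∀ k, ∀ x y : ℝ, x ≤ y → u k y - u k x = ∫ t in x..y, w k t)
    (hψ : ∀ k, ContDiffOn ℝ 1 (ψ k) O)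
    (E : Set ℝ) (hE0 : volume E = 0) :
    volume ((fun t => ∑ k ∈ Finset.range N, u k t * ψ k t) '' (E ∩ O)) = 0 := by
  set G : ℝ → ℝ := fun t => ∑ k ∈ Finset.range N, u k t * ψ k t with hG
  -- cover O by rational closed intervals inside O
  have hcover : E ∩ O ⊆ ⋃ p : ℚ × ℚ, ⋃ (_ : Set.Icc (p.1 : ℝ) p.2 ⊆ O),
      E ∩ Set.Icc (p.1 : ℝ) (p.2 : ℝ) := by
    intro t ⟨htE, htO⟩
    obtain ⟨ε, hε, hball⟩ := Metric.isOpen_iff.mp hO t htO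
    obtain ⟨q, hq1, hq2⟩ := exists_rat_btwn (show t - ε < t by linarith)
    obtain ⟨r, hr1, hr2⟩ := exists_rat_btwn (show t < t + ε by linarith)
    have hsub : Set.Icc (q : ℝ) (r : ℝ) ⊆ O := by
      intro z hz
      apply hball
      rw [Metric.mem_ball, Real.dist_eq, abs_sub_lt_iff]
      constructor <;> nlinarith [hz.1, hz.2]
    exact Set.mem_iUnion.mpr ⟨(q, r), Set.mem_iUnion.mpr ⟨hsub, htE, hq2.le, hr1.le⟩⟩
  refine le_antisymm (le_trans (measure_mono (Set.image_mono hcover)) ?_) zero_le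
  rw [Set.image_iUnion]
  refine le_trans (measure_iUnion_le _) ?_
  have hterm : ∀ p : ℚ × ℚ,
      volume (G '' (⋃ (_ : Set.Icc (p.1 : ℝ) p.2 ⊆ O), E ∩ Set.Icc (p.1 : ℝ) (p.2 : ℝ))) = 0 := by
    intro p
    by_cases hsub : Set.Icc (p.1 : ℝ) p.2 ⊆ O
    swap
    · simp [hsub]
    refine le_antisymm (le_trans (measure_mono (Set.image_mono (f := G)
      (Set.iUnion_subset fun _ => subset_rfl))) ?_) zero_le
    refine le_of_eq ?_
    set q : ℝ := (p.1 : ℝ)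
    set r : ℝ := (p.2 : ℝ)
    -- derivative facts for ψ
    have hψdiff : ∀ k, ∀ t ∈ O, HasDerivAt (ψ k) (deriv (ψ k) t) (t : ℝ) := by
      intro k t ht
      exact (((hψ k).differentiableOn one_ne_zero).differentiableAt (hO.mem_nhds ht)).hasDerivAt
    have hψdc : ∀ k, ContinuousOn (deriv (ψ k)) O := fun k =>
      (hψ k).continuousOn_deriv_of_isOpen hO le_rfl
    -- bounds
    have hbu : ∀ k, ∃ M : ℝ, 0 ≤ M ∧ ∀ t ∈ Set.Icc q r, |u k t| ≤ M := by
      intro k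
      obtain ⟨M, hM⟩ := isCompact_Icc.exists_bound_of_continuousOn (hu k).continuousOn
      exact ⟨max M 0, le_max_right _ _, fun t ht => le_trans (hM t ht) (le_max_left _ _)⟩
    have hbψ : ∀ k, ∃ M : ℝ, 0 ≤ M ∧ ∀ t ∈ Set.Icc q r, |ψ k t| ≤ M := by
      intro k
      obtain ⟨M, hM⟩ := isCompact_Icc.exists_bound_of_continuousOn
        ((hψ k).continuousOn.mono hsub)
      exact ⟨max M 0, le_max_right _ _, fun t ht => le_trans (hM t ht) (le_max_left _ _)⟩
    choose Ku hKu0 hKu using hbu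
    choose Kψ hKψ0 hKψ using hbψ
    set ρ : ℝ → ℝ := fun t => ∑ k ∈ Finset.range N,
      (Ku k * |deriv (ψ k) t| + Kψ k * |w k t|) with hρ
    have hρ0 : ∀ t, 0 ≤ ρ t := by
      intro t
      refine Finset.sum_nonneg fun k _ => add_nonneg ?_ ?_
      · exact mul_nonneg (hKu0 k) (abs_nonneg _)
      · exact mul_nonneg (hKψ0 k) (abs_nonneg _)
    have hintdψ : ∀ k, IntegrableOn (fun t => |deriv (ψ k) t|) (Set.Icc q r) := by
      intro k
      exact (((hψdc k).mono hsub).abs).integrableOn_Icc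
    have hintw : ∀ k, IntegrableOn (fun t => |w k t|) (Set.Icc q r) := fun k =>
      ((hw k).integrableOn_isCompact isCompact_Icc).abs
    have hρint : IntegrableOn ρ (Set.Icc q r) := by
      refine MeasureTheory.integrable_finset_sum _ fun k _ => ?_
      exact ((hintdψ k).const_mul _).add ((hintw k).const_mul _)
    -- the control estimate
    have hctrl : ∀ x y, x ∈ Set.Icc q r → y ∈ Set.Icc q r → x ≤ y →
        |G y - G x| ≤ ∫ t in x..y, ρ t := by
      intro x y hx hy hxy
      have hIccsub : Set.Icc x y ⊆ Set.Icc q r := Set.Icc_subset_Icc hx.1 hy.2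
      have huIcc : Set.uIcc x y = Set.Icc x y := Set.uIcc_of_le hxy
      have hiidψ : ∀ k, IntervalIntegrable (deriv (ψ k)) volume x y := by
        intro k
        refine IntegrableOn.intervalIntegrable ?_
        rw [huIcc]
        exact ((hψdc k).mono (hIccsub.trans hsub)).integrableOn_Icc
      have hiiw : ∀ k, IntervalIntegrable (w k) volume x y := by
        intro k
        refine IntegrableOn.intervalIntegrable ?_
        rw [huIcc]
        exact (hw k).integrableOn_isCompact isCompact_Icc
      have hterm : ∀ k ∈ Finset.range N, |u k y * ψ k y - u k x * ψ k x| ≤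
          ∫ t in x..y, (Ku k * |deriv (ψ k) t| + Kψ k * |w k t|) := by
        intro k _
        have hΔψ : ψ k y - ψ k x = ∫ t in x..y, deriv (ψ k) t := by
          refine (intervalIntegral.integral_eq_sub_of_hasDerivAt ?_ (hiidψ k)).symm
          intro t ht
          rw [huIcc] at ht
          exact hψdiff k t (hsub (hIccsub ht))
        have hΔu : u k y - u k x = ∫ t in x..y, w k t := huw k x y hxy
        have h1 : |ψ k y - ψ k x| ≤ ∫ t in x..y, |deriv (ψ k) t| := by
          rw [hΔψ]
          exact intervalIntegral.abs_integral_le_integral_abs hxy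
        have h2 : |u k y - u k x| ≤ ∫ t in x..y, |w k t| := by
          rw [hΔu]
          exact intervalIntegral.abs_integral_le_integral_abs hxy
        have hsplit : u k y * ψ k y - u k x * ψ k x
            = u k y * (ψ k y - ψ k x) + ψ k x * (u k y - u k x) := by ring
        have habs : |u k y * ψ k y - u k x * ψ k x| ≤
            |u k y| * |ψ k y - ψ k x| + |ψ k x| * |u k y - u k x| := by
          rw [hsplit]
          refine le_trans (abs_add_le _ _) ?_
          rw [abs_mul, abs_mul]
        have hint1 : (0:ℝ) ≤ ∫ t in x..y, |deriv (ψ k) t| :=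
          intervalIntegral.integral_nonneg hxy (fun t _ => abs_nonneg _)
        have hint2 : (0:ℝ) ≤ ∫ t in x..y, |w k t| :=
          intervalIntegral.integral_nonneg hxy (fun t _ => abs_nonneg _)
        have hb1 : |u k y| * |ψ k y - ψ k x| ≤ Ku k * ∫ t in x..y, |deriv (ψ k) t| := by
          refine mul_le_mul (hKu k y hy) h1 (abs_nonneg _) (hKu0 k)
        have hb2 : |ψ k x| * |u k y - u k x| ≤ Kψ k * ∫ t in x..y, |w k t| := by
          refine mul_le_mul (hKψ k x hx) h2 (abs_nonneg _) (hKψ0 k)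
        rw [intervalIntegral.integral_add ((hiidψ k).abs.const_mul _) ((hiiw k).abs.const_mul _),
          intervalIntegral.integral_const_mul, intervalIntegral.integral_const_mul]
        exact le_trans habs (add_le_add hb1 hb2)
      have hGsum : G y - G x = ∑ k ∈ Finset.range N, (u k y * ψ k y - u k x * ψ k x) := by
        rw [hG, Finset.sum_sub_distrib]
      rw [hGsum]
      refine le_trans (Finset.abs_sum_le_sum_abs _ _) ?_
      simp only [hρ]
      rw [intervalIntegral.integral_finset_sum
        (fun k _ => ((hiidψ k).abs.const_mul _).add ((hiiw k).abs.const_mul _))]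
      exact Finset.sum_le_sum hterm
    have hE0' : volume (E ∩ Set.Icc q r) = 0 :=
      le_antisymm (le_trans (measure_mono Set.inter_subset_left) hE0.le) zero_le
    exact luzin_core G ρ q r hρint hρ0 hctrl _ Set.inter_subset_right hE0'
  simp only [hterm]
  simp

lemma deriv_zero_of_acc (h : ℝ → ℝ) (c : ℝ) (t : ℝ) (hd : HasDerivAt h c t)
    (V : Set ℝ) (hV : ∀ s ∈ V, h s = 0) (htV : t ∈ V) (hacc : AccPt t (𝓟 V)) :
    c = 0 := by
  by_contra hc
  have hfreq : ∃ᶠ y in 𝓝 t, y ≠ t ∧ y ∈ V := accPt_iff_frequently.mp hacc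
  have hlo := hd.isLittleO  -- guess name
  rw [Asymptotics.isLittleO_iff] at hlo
  have hev := hlo (show (0:ℝ) < |c| / 2 by positivity)
  obtain ⟨y, ⟨hyt, hyV⟩, hsmall⟩ := (hfreq.and_eventually hev).exists
  rw [hV y hyV, hV t htV] at hsmall
  simp only [ContinuousLinearMap.smulRight_apply, ContinuousLinearMap.one_apply,
    smul_eq_mul] at hsmall
  have hyt' : y - t ≠ 0 := sub_ne_zero.mpr hyt
  have : ‖(y - t) * c‖ = |y - t| * |c| := by
    rw [Real.norm_eq_abs, abs_mul]
  rw [show (0:ℝ) - 0 - (y - t) * c = -((y - t) * c) by ring, norm_neg, this,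
    Real.norm_eq_abs] at hsmall
  have habs : (0:ℝ) < |y - t| := abs_pos.mpr hyt'
  have : |c| ≤ |c| / 2 := by
    have := hsmall
    nlinarith [abs_nonneg c]
  have hc0 : (0:ℝ) < |c| := abs_pos.mpr hc
  linarith

lemma countable_isolated (V : Set ℝ) : {t | t ∈ V ∧ ¬ AccPt t (𝓟 V)}.Countable := by
  set s := {t | t ∈ V ∧ ¬ AccPt t (𝓟 V)} with hs
  have hex : ∀ t ∈ s, ∃ p : ℚ × ℚ, t ∈ Set.Ioo (p.1 : ℝ) (p.2 : ℝ) ∧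
      ∀ y ∈ V ∩ Set.Ioo (p.1 : ℝ) (p.2 : ℝ), y = t := by
    rintro t ⟨htV, hnacc⟩
    rw [accPt_iff_nhds] at hnacc
    push_neg at hnacc
    obtain ⟨U, hU, hUt⟩ := hnacc
    obtain ⟨ε, hε, hball⟩ := Metric.mem_nhds_iff.mp hU
    obtain ⟨q, hq1, hq2⟩ := exists_rat_btwn (show t - ε < t by linarith)
    obtain ⟨r, hr1, hr2⟩ := exists_rat_btwn (show t < t + ε by linarith)
    refine ⟨(q, r), ⟨hq2, hr1⟩, ?_⟩
    rintro y ⟨hyV, hy1, hy2⟩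
    have hyU : y ∈ U := hball (by
      rw [Metric.mem_ball, Real.dist_eq, abs_sub_lt_iff]
      constructor <;> nlinarith)
    exact hUt y ⟨hyU, hyV⟩
  choose! f hf1 hf2 using hex
  have hinj : Set.InjOn f s := by
    intro x hx y hy hxy
    have hyV : y ∈ V := hy.1
    have : y ∈ V ∩ Set.Ioo ((f x).1 : ℝ) ((f x).2 : ℝ) := by
      refine ⟨hyV, ?_⟩
      rw [hxy]
      exact hf1 y hy
    exact (hf2 x hx y this).symm
  exact countable_of_injective_of_countable_image hinj
    ((Set.countable_univ (α := ℚ × ℚ)).mono (Set.subset_univ _))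

/-- If `λ = (λ₁,…,λ_d) : ℝ → ℝ^d` is `C¹` and the coefficients of the monic
polynomial `P(t)(Z) = ∏ⱼ (Z - λⱼ(t))` are of class `W^{2,1}_loc`, then every derivative
`λⱼ'` has the Luzin (N) property. -/
theorem deriv_of_roots_luzinN {d : ℕ} (lam : Fin d → ℝ → ℝ)
    (hC1 : ∀ j : Fin d, ContDiff ℝ 1 (lam j))
    (hcoeff : ∀ i : ℕ,
      W21loc (fun t => (∏ j : Fin d, (Polynomial.X - Polynomial.C (lam j t))).coeff i)) :
    ∀ j : Fin d, ∀ E : Set ℝ, volume E = 0 → volume (deriv (lam j) '' E) = 0 := by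
  intro j E hE0
  classical
  set φ : ℝ → ℝ := lam j with hφ
  have hφC1 : ContDiff ℝ 1 φ := hC1 j
  set c : ℕ → ℝ → ℝ := fun k t => (∏ i : Fin d, (X - Polynomial.C (lam i t))).coeff k with hc
  have hck : ∀ k, ContDiff ℝ 1 (c k) := fun k => (hcoeff k).1
  choose w hwloc hwint using fun k => (hcoeff k).2
  -- basic polynomial facts
  have hPmonic : ∀ t, (∏ i : Fin d, (X - Polynomial.C (lam i t))).Monic :=
    fun t => monic_prod_of_monic _ _ fun i _ => monic_X_sub_C _
  have hPdeg : ∀ t, (∏ i : Fin d, (X - Polynomial.C (lam i t))).natDegree = d := by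
    intro t
    rw [Polynomial.natDegree_prod _ _ (fun i _ => X_sub_C_ne_zero _)]
    simp [natDegree_X_sub_C]
  -- the ladder functions
  set R : ℕ → ℝ → ℝ := fun m t => ∑ k ∈ Finset.range (d+1),
    c k t * (Nat.descFactorial k m : ℝ) * φ t ^ (k - m) with hR
  set A : ℕ → ℝ → ℝ := fun m t => ∑ k ∈ Finset.range (d+1),
    deriv (c k) t * (Nat.descFactorial k m : ℝ) * φ t ^ (k - m) with hA
  have hR0 : ∀ t, R 0 t = 0 := by
    intro t
    have heval : (∏ i : Fin d, (X - Polynomial.C (lam i t))).eval (φ t) = 0 := by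
      rw [Polynomial.eval_prod]
      refine Finset.prod_eq_zero (Finset.mem_univ j) ?_
      simp [hφ]
    have hsum := Polynomial.eval_eq_sum_range' (n := d + 1)
      (by rw [hPdeg t]; exact Nat.lt_succ_self d) (φ t)
    rw [hR]
    simp only [Nat.descFactorial_zero, Nat.cast_one, mul_one, Nat.sub_zero]
    rw [← heval, hsum]
  have hRd : ∀ t, R d t = (Nat.factorial d : ℝ) := by
    intro t
    simp only [hR]
    rw [Finset.sum_eq_single d]
    · have hcd : c d t = 1 := by
        rw [hc]
        have := (hPmonic t).coeff_natDegree
        rwa [hPdeg t] at this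
      rw [hcd, Nat.descFactorial_self, Nat.sub_self, pow_zero, one_mul, mul_one]
    · intro k hk hkd
      have hklt : k < d := lt_of_le_of_ne (Nat.lt_succ_iff.mp (Finset.mem_range.mp hk)) hkd
      rw [Nat.descFactorial_eq_zero_iff_lt.mpr hklt]
      simp
    · intro hd
      exact absurd (Finset.self_mem_range_succ d) hd
  have hRd' : ∀ t, R d t ≠ 0 := by
    intro t
    rw [hRd t]
    exact_mod_cast Nat.factorial_ne_zero d
  have hRC1 : ∀ m, ContDiff ℝ 1 (R m) := by
    intro m
    simp only [hR]
    refine ContDiff.sum fun k _ => ?_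
    exact ((hck k).mul contDiff_const).mul (hφC1.pow _)
  have hladder : ∀ m t, HasDerivAt (R m) (A m t + R (m+1) t * deriv φ t) t := by
    intro m t
    have hφd : HasDerivAt φ (deriv φ t) t :=
      ((hφC1.differentiable one_ne_zero) t).hasDerivAt
    have hterm : ∀ k ∈ Finset.range (d+1),
        HasDerivAt (fun s => c k s * (Nat.descFactorial k m : ℝ) * φ s ^ (k - m))
          (deriv (c k) t * (Nat.descFactorial k m : ℝ) * φ t ^ (k - m)
            + c k t * (Nat.descFactorial k (m+1) : ℝ) * φ t ^ (k - (m+1)) * deriv φ t) t := by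
      intro k _
      have hckd : HasDerivAt (fun s => c k s * (Nat.descFactorial k m : ℝ))
          (deriv (c k) t * (Nat.descFactorial k m : ℝ)) t :=
        (((hck k).differentiable one_ne_zero) t).hasDerivAt.mul_const _
      have hpow : HasDerivAt (fun s => φ s ^ (k - m))
          ((k - m : ℕ) * φ t ^ (k - m - 1) * deriv φ t) t := hφd.pow _
      have := hckd.fun_mul hpow
      refine this.congr_deriv ?_
      have hdesc : (Nat.descFactorial k (m+1) : ℝ)
          = (Nat.descFactorial k m : ℝ) * ((k - m : ℕ) : ℝ) := by
        rw [Nat.descFactorial_succ]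
        push_cast
        ring
      rw [hdesc, Nat.sub_sub]
      ring
    have hsum := HasDerivAt.fun_sum hterm
    refine hsum.congr_deriv ?_
    simp only [hA, hR]
    rw [Finset.sum_add_distrib, Finset.sum_mul]
  -- the sets
  set V : ℕ → Set ℝ := fun m => {s | R m s = 0} with hV
  set O : ℕ → Set ℝ := fun m => {s | R (m+1) s ≠ 0} with hO
  have hOopen : ∀ m, IsOpen (O m) := by
    intro m
    have : O m = (R (m+1)) ⁻¹' {(0:ℝ)}ᶜ := rfl
    rw [this]
    exact (isOpen_compl_singleton).preimage (hRC1 (m+1)).continuous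
  set ψ : ℕ → ℕ → ℝ → ℝ := fun m k t =>
    -((Nat.descFactorial k m : ℝ) * φ t ^ (k - m)) / R (m+1) t with hψ
  have hψC1 : ∀ m k, ContDiffOn ℝ 1 (ψ m k) (O m) := by
    intro m k
    refine ContDiffOn.div ?_ ((hRC1 (m+1)).contDiffOn) (fun t ht => ht)
    exact ((contDiff_const.mul (hφC1.pow _)).neg).contDiffOn
  set G : ℕ → ℝ → ℝ := fun m t => ∑ k ∈ Finset.range (d+1),
    deriv (c k) t * ψ m k t with hG
  -- main inclusion
  have hmain : deriv φ '' E ⊆ ⋃ m : ℕ,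
      (G m '' (E ∩ O m) ∪ deriv φ '' {t | t ∈ V m ∧ ¬ AccPt t (𝓟 (V m))}) := by
    rintro _ ⟨t, htE, rfl⟩
    have hex : ∃ i, R i t ≠ 0 := ⟨d, hRd' t⟩
    have hk0 : R (Nat.find hex) t ≠ 0 := Nat.find_spec hex
    have hk0pos : Nat.find hex ≠ 0 := by
      intro h
      rw [h] at hk0
      exact hk0 (hR0 t)
    obtain ⟨m, hm⟩ := Nat.exists_eq_succ_of_ne_zero hk0pos
    have hmV : R m t = 0 := not_not.mp (Nat.find_min hex (by omega))
    have hm1 : R (m+1) t ≠ 0 := by rw [hm] at hk0; exact hk0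
    refine Set.mem_iUnion.mpr ⟨m, ?_⟩
    by_cases hacc : AccPt t (𝓟 (V m))
    · left
      have hder : A m t + R (m+1) t * deriv φ t = 0 :=
        deriv_zero_of_acc (R m) _ t (hladder m t) (V m) (fun s hs => hs) hmV hacc
      refine ⟨t, ⟨htE, hm1⟩, ?_⟩
      -- G m t = deriv φ t
      have hGt : G m t = -(A m t) / R (m+1) t := by
        simp only [hG, hA]
        rw [eq_div_iff hm1, Finset.sum_mul, ← Finset.sum_neg_distrib]
        refine Finset.sum_congr rfl fun k _ => ?_
        simp only [hψ]
        field_simp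
      rw [hGt, div_eq_iff hm1]
      linarith [hder]
    · right
      exact ⟨t, ⟨hmV, hacc⟩, rfl⟩
  -- conclude
  have hzero : ∀ m : ℕ,
      volume (G m '' (E ∩ O m) ∪ deriv φ '' {t | t ∈ V m ∧ ¬ AccPt t (𝓟 (V m))}) = 0 := by
    intro m
    refine le_antisymm (le_trans (measure_union_le _ _) ?_) zero_le
    have h1 : volume (G m '' (E ∩ O m)) = 0 := by
      simp only [hG]
      exact luzin_sum_prod (d+1) (fun k => deriv (c k)) w (ψ m) (O m) (hOopen m)
        (fun k => (hck k).continuous_deriv le_rfl) hwloc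
        (fun k x y hxy => hwint k x y hxy) (hψC1 m) E hE0
    have h2 : volume (deriv φ '' {t | t ∈ V m ∧ ¬ AccPt t (𝓟 (V m))}) = 0 :=
      ((countable_isolated (V m)).image _).measure_zero volume
    rw [h1, h2, add_zero]
  refine le_antisymm (le_trans (measure_mono hmain) ?_) zero_le
  refine le_trans (measure_iUnion_le _) (le_of_eq ?_)
  simp only [hzero, tsum_zero]
end

section
/- Let φ : ℝ → ℝ be differentiable everywhere and difference-convex, i.e. φ = g − h for two continuous convex functions g, h : ℝ → ℝ. Then φ is continuously differentiable. -/
open Set Filter Topology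

/-- Right-derivative-like quantity for a function `k`. -/
noncomputable def rdv (k : ℝ → ℝ) (x : ℝ) : ℝ :=
  sInf ((fun t => (k t - k x) / (t - x)) '' Ioi x)

lemma rdv_bddBelow {k : ℝ → ℝ} (hk : ConvexOn ℝ Set.univ k) (x : ℝ) :
    BddBelow ((fun t => (k t - k x) / (t - x)) '' Ioi x) := by
  refine ⟨(k (x - 1) - k x) / ((x - 1) - x), ?_⟩
  rintro v ⟨t, ht, rfl⟩
  exact hk.secant_mono (mem_univ x) (mem_univ (x - 1)) (mem_univ t)
    (ne_of_lt (by linarith)) (ne_of_gt (Set.mem_Ioi.1 ht))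
    (by linarith [Set.mem_Ioi.1 ht])

lemma rdv_tendsto {k : ℝ → ℝ} (hk : ConvexOn ℝ Set.univ k) (x : ℝ) :
    Tendsto (fun t => (k t - k x) / (t - x)) (𝓝[>] x) (𝓝 (rdv k x)) := by
  refine MonotoneOn.tendsto_nhdsGT ?_ (rdv_bddBelow hk x)
  intro a ha b hb hab
  exact hk.secant_mono (mem_univ x) (mem_univ a) (mem_univ b)
    (ne_of_gt ha) (ne_of_gt hb) hab

lemma rdv_mono {k : ℝ → ℝ} (hk : ConvexOn ℝ Set.univ k) : Monotone (rdv k) := by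
  intro x y hxy
  rcases eq_or_lt_of_le hxy with rfl | hxy
  · exact le_rfl
  have h1 : rdv k x ≤ (k y - k x) / (y - x) :=
    csInf_le (rdv_bddBelow hk x) ⟨y, hxy, rfl⟩
  have h2 : (k y - k x) / (y - x) ≤ rdv k y := by
    refine le_csInf ⟨(k (y + 1) - k y) / ((y + 1) - y), ⟨y + 1, by simp, rfl⟩⟩ ?_
    rintro v ⟨t, ht, rfl⟩
    have hx : (k x - k y) / (x - y) ≤ (k t - k y) / (t - y) :=
      hk.secant_mono (mem_univ y) (mem_univ x) (mem_univ t)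
        (ne_of_lt hxy) (ne_of_gt (Set.mem_Ioi.1 ht))
        (le_of_lt (hxy.trans (Set.mem_Ioi.1 ht)))
    have : (k y - k x) / (y - x) = (k x - k y) / (x - y) := by
      rw [← neg_div_neg_eq]; ring_nf
    linarith [hx, this.ge, this.le]
  exact h1.trans h2

/-- Darboux: if the derivative of an everywhere differentiable function has a limit
from the right at `x`, that limit is the value at `x`. -/
lemma deriv_tendsto_right {φ : ℝ → ℝ} (hφ : Differentiable ℝ φ) {x L : ℝ}
    (hL : Tendsto (deriv φ) (𝓝[>] x) (𝓝 L)) :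
    Tendsto (deriv φ) (𝓝[>] x) (𝓝 (deriv φ x)) := by
  set f := deriv φ with hf
  suffices hLe : L = f x by rwa [hLe] at hL
  by_contra hne
  rcases lt_or_gt_of_ne hne with hlt | hgt
  · -- L < f x : eventually f t < c := (L + f x)/2 on the right
    set c := (L + f x) / 2 with hc
    have hLc : L < c := by simp only [hc]; linarith
    have hcf : c < f x := by simp only [hc]; linarith
    have hev : ∀ᶠ t in 𝓝[>] x, f t < c := hL.eventually_lt_const hLc
    obtain ⟨z, hz, hsub⟩ := mem_nhdsGT_iff_exists_Ioc_subset.1 hev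
    have hzx : x < z := hz
    have hoc : OrdConnected (f '' Icc x z) :=
      (ordConnected_Icc).image_deriv (fun y _ => hφ y)
    have hfz : f z ∈ f '' Icc x z := ⟨z, ⟨le_of_lt hzx, le_rfl⟩, rfl⟩
    have hfx : f x ∈ f '' Icc x z := ⟨x, ⟨le_rfl, le_of_lt hzx⟩, rfl⟩
    have hcz : f z < c := hsub ⟨hzx, le_rfl⟩
    have hcmem : c ∈ f '' Icc x z :=
      hoc.out hfz hfx ⟨le_of_lt hcz, le_of_lt hcf⟩
    obtain ⟨w, hw, hwc⟩ := hcmem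
    rcases eq_or_lt_of_le hw.1 with rfl | hxw
    · exact (ne_of_gt hcf) hwc
    · exact absurd hwc (ne_of_lt (hsub ⟨hxw, hw.2⟩))
  · -- f x < L
    set c := (L + f x) / 2 with hc
    have hcL : c < L := by simp only [hc]; linarith
    have hfc : f x < c := by simp only [hc]; linarith
    have hev : ∀ᶠ t in 𝓝[>] x, c < f t := hL.eventually_const_lt hcL
    obtain ⟨z, hz, hsub⟩ := mem_nhdsGT_iff_exists_Ioc_subset.1 hev
    have hzx : x < z := hz
    have hoc : OrdConnected (f '' Icc x z) :=
      (ordConnected_Icc).image_deriv (fun y _ => hφ y)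
    have hfz : f z ∈ f '' Icc x z := ⟨z, ⟨le_of_lt hzx, le_rfl⟩, rfl⟩
    have hfx : f x ∈ f '' Icc x z := ⟨x, ⟨le_rfl, le_of_lt hzx⟩, rfl⟩
    have hcz : c < f z := hsub ⟨hzx, le_rfl⟩
    have hcmem : c ∈ f '' Icc x z :=
      hoc.out hfx hfz ⟨le_of_lt hfc, le_of_lt hcz⟩
    obtain ⟨w, hw, hwc⟩ := hcmem
    rcases eq_or_lt_of_le hw.1 with rfl | hxw
    · exact (ne_of_lt hfc) hwc
    · exact absurd hwc (ne_of_gt (hsub ⟨hxw, hw.2⟩))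

/-- Darboux: left-sided version. -/
lemma deriv_tendsto_left {φ : ℝ → ℝ} (hφ : Differentiable ℝ φ) {x L : ℝ}
    (hL : Tendsto (deriv φ) (𝓝[<] x) (𝓝 L)) :
    Tendsto (deriv φ) (𝓝[<] x) (𝓝 (deriv φ x)) := by
  set f := deriv φ with hf
  suffices hLe : L = f x by rwa [hLe] at hL
  by_contra hne
  rcases lt_or_gt_of_ne hne with hlt | hgt
  · set c := (L + f x) / 2 with hc
    have hLc : L < c := by simp only [hc]; linarith
    have hcf : c < f x := by simp only [hc]; linarith
    have hev : ∀ᶠ t in 𝓝[<] x, f t < c := hL.eventually_lt_const hLc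
    obtain ⟨z, hz, hsub⟩ := mem_nhdsLT_iff_exists_Ico_subset.1 hev
    have hzx : z < x := hz
    have hoc : OrdConnected (f '' Icc z x) :=
      (ordConnected_Icc).image_deriv (fun y _ => hφ y)
    have hfz : f z ∈ f '' Icc z x := ⟨z, ⟨le_rfl, le_of_lt hzx⟩, rfl⟩
    have hfx : f x ∈ f '' Icc z x := ⟨x, ⟨le_of_lt hzx, le_rfl⟩, rfl⟩
    have hcz : f z < c := hsub ⟨le_rfl, hzx⟩
    have hcmem : c ∈ f '' Icc z x :=
      hoc.out hfz hfx ⟨le_of_lt hcz, le_of_lt hcf⟩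
    obtain ⟨w, hw, hwc⟩ := hcmem
    rcases eq_or_lt_of_le hw.2 with heq | hwx
    · rw [heq] at hwc; exact absurd hwc (ne_of_lt hcf).symm
    · exact absurd hwc (ne_of_lt (hsub ⟨hw.1, hwx⟩))
  · set c := (L + f x) / 2 with hc
    have hcL : c < L := by simp only [hc]; linarith
    have hfc : f x < c := by simp only [hc]; linarith
    have hev : ∀ᶠ t in 𝓝[<] x, c < f t := hL.eventually_const_lt hcL
    obtain ⟨z, hz, hsub⟩ := mem_nhdsLT_iff_exists_Ico_subset.1 hev
    have hzx : z < x := hz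
    have hoc : OrdConnected (f '' Icc z x) :=
      (ordConnected_Icc).image_deriv (fun y _ => hφ y)
    have hfz : f z ∈ f '' Icc z x := ⟨z, ⟨le_rfl, le_of_lt hzx⟩, rfl⟩
    have hfx : f x ∈ f '' Icc z x := ⟨x, ⟨le_of_lt hzx, le_rfl⟩, rfl⟩
    have hcz : c < f z := hsub ⟨le_rfl, hzx⟩
    have hcmem : c ∈ f '' Icc z x :=
      hoc.out hfx hfz ⟨le_of_lt hfc, le_of_lt hcz⟩
    obtain ⟨w, hw, hwc⟩ := hcmem
    rcases eq_or_lt_of_le hw.2 with heq | hwx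
    · rw [heq] at hwc; exact absurd hwc (ne_of_gt hfc).symm
    · exact absurd hwc (ne_of_gt (hsub ⟨hw.1, hwx⟩))

/-- An everywhere differentiable difference-convex function `φ : ℝ → ℝ` is
continuously differentiable. -/
theorem differentiable_DC_is_C1 (φ g h : ℝ → ℝ)
    (hg : Continuous g) (hh : Continuous h)
    (hgc : ConvexOn ℝ Set.univ g) (hhc : ConvexOn ℝ Set.univ h)
    (hφ : ∀ t : ℝ, φ t = g t - h t)
    (hdiff : Differentiable ℝ φ) :
    ContDiff ℝ 1 φ := by
  set A := rdv g with hA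
  set B := rdv h with hB
  -- deriv φ = A - B pointwise
  have key : ∀ t : ℝ, deriv φ t = A t - B t := by
    intro t
    have hslope : Tendsto (fun s => (φ s - φ t) / (s - t)) (𝓝[>] t) (𝓝 (deriv φ t)) := by
      have := hasDerivAt_iff_tendsto_slope.1 (hdiff t).hasDerivAt
      have hmono : 𝓝[>] t ≤ 𝓝[≠] t :=
        nhdsWithin_mono t (fun y hy => ne_of_gt hy)
      have := this.mono_left hmono
      refine this.congr (fun s => ?_)
      simp [slope_def_field, div_eq_div_iff]
    have hBt : Tendsto (fun s => (h s - h t) / (s - t)) (𝓝[>] t) (𝓝 (B t)) :=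
      rdv_tendsto hhc t
    have hsum : Tendsto (fun s => (g s - g t) / (s - t)) (𝓝[>] t)
        (𝓝 (deriv φ t + B t)) := by
      have := hslope.add hBt
      refine this.congr (fun s => ?_)
      have : φ s = g s - h s := hφ s
      have h2 : φ t = g t - h t := hφ t
      rw [← add_div]
      congr 1
      rw [this, h2]; ring
    have hAt : Tendsto (fun s => (g s - g t) / (s - t)) (𝓝[>] t) (𝓝 (A t)) :=
      rdv_tendsto hgc t
    have := tendsto_nhds_unique hsum hAt
    linarith
  -- deriv φ is continuous
  have hcont : Continuous (deriv φ) := by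
    rw [continuous_iff_continuousAt]
    intro x
    rw [continuousAt_iff_continuous_left'_right']
    constructor
    · -- left
      have hAl : Tendsto A (𝓝[<] x) (𝓝 (sSup (A '' Iio x))) :=
        (rdv_mono hgc).tendsto_nhdsLT x
      have hBl : Tendsto B (𝓝[<] x) (𝓝 (sSup (B '' Iio x))) :=
        (rdv_mono hhc).tendsto_nhdsLT x
      have : Tendsto (deriv φ) (𝓝[<] x)
          (𝓝 (sSup (A '' Iio x) - sSup (B '' Iio x))) :=
        (hAl.sub hBl).congr (fun t => (key t).symm)
      exact deriv_tendsto_left hdiff this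
    · -- right
      have hAr : Tendsto A (𝓝[>] x) (𝓝 (sInf (A '' Ioi x))) :=
        (rdv_mono hgc).tendsto_nhdsGT x
      have hBr : Tendsto B (𝓝[>] x) (𝓝 (sInf (B '' Ioi x))) :=
        (rdv_mono hhc).tendsto_nhdsGT x
      have : Tendsto (deriv φ) (𝓝[>] x)
          (𝓝 (sInf (A '' Ioi x) - sInf (B '' Ioi x))) :=
        (hAr.sub hBr).congr (fun t => (key t).symm)
      exact deriv_tendsto_right hdiff this
  exact contDiff_one_iff_deriv.2 ⟨hdiff, hcont⟩
end
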